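/- Let G act without inversion on a graph Y such that G acts freely on the directed edge set E_Y. Then the natural morphism of graphs p: Y -> G\Y to the quotient graph is a branched cover, and for each vertex w of Y the ramification index m_w equals the cardinality of the stabilizer Stab_G(w). -/

import Mathlib

/-- A graph in Serre's formalism. -/
structure SerreGraph where
  V : Type
  E : Type
  o : E → V
  t : E → V
  inv : E → E
  inv_ne : ∀ e, inv e ≠ e
  inv_inv : ∀ e, inv (inv e) = e
  o_inv : ∀ e, o (inv e) = t e

namespace SerreGraph

variable (X : SerreGraph)

/-- `Adj a b` : there is a directed edge from `a` to `b`. -/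
def Adj (a b : X.V) : Prop := ∃ e, X.o e = a ∧ X.t e = b

/-- A graph is connected if any two vertices are joined by a path of directed edges. -/
def Connected : Prop := ∀ a b : X.V, Relation.ReflTransGen X.Adj a b

/-- The degree (sum of coefficients) map `s : Div(X) → ℤ`. -/
noncomputable def degMap : (X.V →₀ ℤ) →ₗ[ℤ] ℤ :=
  Finsupp.lsum ℤ fun _ => (LinearMap.id : ℤ →ₗ[ℤ] ℤ)

/-- The valency of a vertex: the number of directed edges with origin `v`. -/
noncomputable def val (v : X.V) : ℕ := Nat.card {e : X.E // X.o e = v}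

/-- The Laplacian operator `L = D - A` on `Div(X)`, the free abelian group on vertices. -/
noncomputable def lap : (X.V →₀ ℤ) →ₗ[ℤ] (X.V →₀ ℤ) :=
  Finsupp.lsum ℤ fun v => LinearMap.toSpanSingleton ℤ _
    ((X.val v : ℤ) • Finsupp.single v (1 : ℤ)
      - ∑ᶠ e : {e : X.E // X.o e = v}, Finsupp.single (X.t e.1) (1 : ℤ))

/-- The degree operator `D` on `Div(X)`. -/
noncomputable def degOp : (X.V →₀ ℤ) →ₗ[ℤ] (X.V →₀ ℤ) :=
  Finsupp.lsum ℤ fun v => LinearMap.toSpanSingleton ℤ _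
    ((X.val v : ℤ) • Finsupp.single v (1 : ℤ))

/-- The adjacency operator `A` on `Div(X)`. -/
noncomputable def adjOp : (X.V →₀ ℤ) →ₗ[ℤ] (X.V →₀ ℤ) :=
  Finsupp.lsum ℤ fun v => LinearMap.toSpanSingleton ℤ _
    (∑ᶠ e : {e : X.E // X.o e = v}, Finsupp.single (X.t e.1) (1 : ℤ))

/-- Degree-zero divisors. -/
noncomputable def Div0 : Submodule ℤ (X.V →₀ ℤ) := LinearMap.ker X.degMap

/-- Principal divisors: the image of the Laplacian. -/
noncomputable def Pr : Submodule ℤ (X.V →₀ ℤ) := LinearMap.range X.lap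

/-- The Picard group of degree zero: `Div⁰(X)/Pr(X)`. -/
noncomputable def Pic0 := X.Div0 ⧸ X.Pr.comap X.Div0.subtype

noncomputable instance : AddCommGroup X.Pic0 :=
  inferInstanceAs (AddCommGroup (X.Div0 ⧸ X.Pr.comap X.Div0.subtype))

noncomputable instance : Module ℤ X.Pic0 :=
  inferInstanceAs (Module ℤ (X.Div0 ⧸ X.Pr.comap X.Div0.subtype))

/-- Morphisms of graphs in Serre's formalism. -/
structure Hom (Y X : SerreGraph) where
  fV : Y.V → X.V
  fE : Y.E → X.E
  o_map : ∀ e, X.o (fE e) = fV (Y.o e)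
  t_map : ∀ e, X.t (fE e) = fV (Y.t e)
  inv_map : ∀ e, X.inv (fE e) = fE (Y.inv e)

/-- A branched cover with ramification indices `m`: surjective on vertices and
directed edges, and over each edge at `f(w)` the fiber in the edges at `w`
has cardinality `m w`. -/
def IsBranchedCover {Y X : SerreGraph} (f : Hom Y X) (m : Y.V → ℕ) : Prop :=
  Function.Surjective f.fV ∧ Function.Surjective f.fE ∧
    ∀ (w : Y.V) (e : X.E), X.o e = f.fV w →
      Nat.card {ε : Y.E // Y.o ε = w ∧ f.fE ε = e} = m w

/-- The pushforward `f_* : Div(Y) → Div(X)`, sending a vertex `w` to `f(w)`. -/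
noncomputable def pushforward {Y X : SerreGraph} (f : Hom Y X) :
    (Y.V →₀ ℤ) →ₗ[ℤ] (X.V →₀ ℤ) :=
  Finsupp.lmapDomain ℤ ℤ f.fV

end SerreGraph

open SerreGraph MulAction in
/-- If `G` acts without inversion on `Y` and freely on the directed edges,
then the natural map `p : Y → G\Y` to the quotient graph is a branched cover: `p` is
surjective on vertices and edges (being a quotient map), and for every vertex `w` and every
quotient edge at `p(w)` the fiber in the edges at `w` has cardinality `|Stab_G(w)|`. -/
theorem quotient_map_is_branched_cover (Y : SerreGraph) (G : Type) [Group G]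
    [MulAction G Y.V] [MulAction G Y.E]
    (ho : ∀ (σ : G) (e : Y.E), Y.o (σ • e) = σ • Y.o e)
    (ht : ∀ (σ : G) (e : Y.E), Y.t (σ • e) = σ • Y.t e)
    (hinv : ∀ (σ : G) (e : Y.E), Y.inv (σ • e) = σ • Y.inv e)
    (hni : ∀ (σ : G) (e : Y.E), σ • e ≠ Y.inv e)
    (hfreeE : ∀ (σ : G) (e : Y.E), σ • e = e → σ = 1) :
    Function.Surjective (Quotient.mk (orbitRel G Y.V)) ∧
    Function.Surjective (Quotient.mk (orbitRel G Y.E)) ∧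
    ∀ (w : Y.V) (e : Y.E),
      Quotient.mk (orbitRel G Y.V) (Y.o e) = Quotient.mk (orbitRel G Y.V) w →
        Nat.card {e' : Y.E // Y.o e' = w ∧
            Quotient.mk (orbitRel G Y.E) e' = Quotient.mk (orbitRel G Y.E) e}
          = Nat.card (stabilizer G w) := by
  refine ⟨Quotient.mk''_surjective, Quotient.mk''_surjective, ?_⟩
  intro w e he
  have hrel : Y.o e ∈ MulAction.orbit G w := Quotient.eq.mp he
  obtain ⟨σ, hσ⟩ := hrel
  have hσ : σ • w = Y.o e := hσ
  -- σ • w = Y.o e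
  symm
  apply Nat.card_congr
  refine Equiv.ofBijective (fun g => ⟨(g : G) • σ⁻¹ • e, ?_, ?_⟩) ⟨?_, ?_⟩
  · rw [ho, ho, ← hσ, inv_smul_smul]
    exact g.2
  · exact Quotient.sound ⟨(g : G) * σ⁻¹, (mul_smul _ _ _)⟩
  · intro g g' hgg'
    have h2 : ((g : G) * σ⁻¹) • e = ((g' : G) * σ⁻¹) • e := by
      simpa [mul_smul] using congrArg Subtype.val hgg'
    have := hfreeE (((g' : G) * σ⁻¹)⁻¹ * ((g : G) * σ⁻¹)) e (by
      rw [mul_smul, h2, inv_smul_smul])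
    have h3 : (g : G) * σ⁻¹ = (g' : G) * σ⁻¹ := by
      exact (inv_mul_eq_one.mp this).symm
    exact Subtype.ext (mul_right_cancel h3)
  · rintro ⟨e', h1, h2⟩
    have : e' ∈ MulAction.orbit G e := Quotient.eq.mp h2
    obtain ⟨τ, hτ⟩ := this
    have hτ : τ • e = e' := hτ
    refine ⟨⟨τ * σ, ?_⟩, ?_⟩
    · show (τ * σ) • w = w
      rw [mul_smul, hσ, ← ho, hτ, h1]
    · ext
      show (τ * σ) • σ⁻¹ • e = e'
      rw [mul_smul, smul_inv_smul, hτ]
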